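/- Let K ⊆ ℂⁿ be a polynomially convex compact set and let p be a complex polynomial in n variables such that Z(p) ∩ K is nonempty. Then Z(p) ∩ K is polynomially convex. -/

import Mathlib

/-- If `K ⊆ ℂⁿ` is a polynomially convex compact set and `p` is a polynomial with
`Z(p) ∩ K ≠ ∅`, then `Z(p) ∩ K` is a polynomially convex compact set.  Polynomial
convexity of `X`: for every `x ∉ X` there is a polynomial `f` with
`sup_{z ∈ X} |f(z)| < |f(x)|`. -/
theorem stmt4 (n : ℕ) (K : Set (Fin n → ℂ)) (hK : IsCompact K)
    (hKpc : ∀ x ∉ K, ∃ f : MvPolynomial (Fin n) ℂ,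
      sSup ((fun z => ‖MvPolynomial.eval z f‖) '' K)
        < ‖MvPolynomial.eval x f‖)
    (p : MvPolynomial (Fin n) ℂ)
    (hne : ({z | MvPolynomial.eval z p = 0} ∩ K).Nonempty) :
    IsCompact ({z | MvPolynomial.eval z p = 0} ∩ K) ∧
      ∀ x ∉ {z | MvPolynomial.eval z p = 0} ∩ K, ∃ f : MvPolynomial (Fin n) ℂ,
        sSup ((fun z => ‖MvPolynomial.eval z f‖)
            '' ({z | MvPolynomial.eval z p = 0} ∩ K))
          < ‖MvPolynomial.eval x f‖ := by
  have hZclosed : IsClosed {z : Fin n → ℂ | MvPolynomial.eval z p = 0} :=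
    isClosed_eq (MvPolynomial.continuous_eval p) continuous_const
  refine ⟨hK.inter_left hZclosed, ?_⟩
  intro x hx
  by_cases hxK : x ∈ K
  · -- then eval x p ≠ 0; use f = p
    have hxp : MvPolynomial.eval x p ≠ 0 := fun h => hx ⟨h, hxK⟩
    refine ⟨p, ?_⟩
    have himg : (fun z => ‖MvPolynomial.eval z p‖)
        '' ({z | MvPolynomial.eval z p = 0} ∩ K) = {0} := by
      apply Set.eq_singleton_iff_nonempty_unique_mem.mpr
      constructor
      · exact (hne.image _)
      · rintro y ⟨z, ⟨hz, _⟩, rfl⟩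
        simp [Set.mem_setOf_eq.mp hz]
    rw [himg]
    simpa using (norm_pos_iff.mpr hxp)
  · obtain ⟨f, hf⟩ := hKpc x hxK
    refine ⟨f, lt_of_le_of_lt ?_ hf⟩
    apply csSup_le_csSup
    · exact (hK.image (by continuity)).bddAbove
    · exact hne.image _
    · exact Set.image_mono Set.inter_subset_right
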